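/- Let D be a real diagonal n×n matrix whose diagonal entries all lie in the interval [0, 1], and let S be a real symmetric n×n matrix all of whose eigenvalues lie in [−r, r] for some r ≥ 0. Then every complex eigenvalue μ of the product matrix D·S (viewed as a matrix over ℂ) is real and satisfies |μ| ≤ r. -/

import Mathlib

open Matrix


lemma quadA {n : ℕ} (S : Matrix (Fin n) (Fin n) ℝ) (hS : S.IsHermitian)
    (r : ℝ) (hev : ∀ i, |hS.eigenvalues i| ≤ r) (p : Fin n → ℝ) :
    |p ⬝ᵥ S.mulVec p| ≤ r * (p ⬝ᵥ p) := by
  set U : Matrix (Fin n) (Fin n) ℝ := (hS.eigenvectorUnitary : Matrix (Fin n) (Fin n) ℝ) with hU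
  have hUU : U * star U = 1 := (Matrix.mem_unitaryGroup_iff).mp hS.eigenvectorUnitary.2
  set q : Fin n → ℝ := (star U).mulVec p with hq
  have hstar : star U = Uᵀ := by ext i j; simp [Matrix.star_apply]
  have hdot : ∀ z : Fin n → ℝ, p ⬝ᵥ U.mulVec z = q ⬝ᵥ z := by
    intro z
    rw [dotProduct_mulVec, hq, hstar, ← mulVec_transpose]
  have h1 : p ⬝ᵥ S.mulVec p = ∑ i, hS.eigenvalues i * (q i * q i) := by
    conv_lhs => rw [hS.spectral_theorem, Unitary.conjStarAlgAut_apply, ← mulVec_mulVec, ← mulVec_mulVec]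
    rw [hdot]
    simp [dotProduct, mulVec_diagonal, Function.comp]
    exact Finset.sum_congr rfl fun i _ => by ring
  have h2 : p ⬝ᵥ p = ∑ i, q i * q i := by
    have : U.mulVec q = p := by
      rw [hq, mulVec_mulVec, hUU, one_mulVec]
    have h3 := hdot q
    rw [this] at h3
    rw [h3]; rfl
  rw [h1, h2, Finset.mul_sum]
  refine (Finset.abs_sum_le_sum_abs _ _).trans (Finset.sum_le_sum fun i _ => ?_)
  
  rw [abs_mul, abs_of_nonneg (mul_self_nonneg (q i))]
  exact mul_le_mul_of_nonneg_right (hev i) (mul_self_nonneg (q i))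

lemma quadB {n : ℕ} (S : Matrix (Fin n) (Fin n) ℝ) (hS : S.IsHermitian)
    (r : ℝ) (hev : ∀ i, |hS.eigenvalues i| ≤ r) (x : Fin n → ℂ) :
    (∑ i, ∑ j, (starRingEnd ℂ) (x i) * (S i j : ℂ) * x j).im = 0 ∧
    |(∑ i, ∑ j, (starRingEnd ℂ) (x i) * (S i j : ℂ) * x j).re|
      ≤ r * ∑ i, Complex.normSq (x i) := by
  set p : Fin n → ℝ := fun i => (x i).re with hp
  set q : Fin n → ℝ := fun i => (x i).im with hqq
  have hsym : ∀ i j, S j i = S i j := fun i j => hS.apply i j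
  have hterm_re : ∀ i j, ((starRingEnd ℂ) (x i) * (S i j : ℂ) * x j).re
      = S i j * (p i * p j) + S i j * (q i * q j) := by
    intro i j; simp [Complex.mul_re, Complex.mul_im]; ring
  have hterm_im : ∀ i j, ((starRingEnd ℂ) (x i) * (S i j : ℂ) * x j).im
      = S i j * (p i * q j) - S i j * (q i * p j) := by
    intro i j; simp [Complex.mul_re, Complex.mul_im]; ring
  constructor
  · rw [Complex.im_sum]
    simp only [Complex.im_sum, hterm_im]
    simp only [Finset.sum_sub_distrib]
    rw [sub_eq_zero]
    rw [Finset.sum_comm]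
    exact Finset.sum_congr rfl fun j _ => Finset.sum_congr rfl fun i _ => by
      rw [hsym i j]; ring
  · rw [Complex.re_sum]
    simp only [Complex.re_sum, hterm_re, Finset.sum_add_distrib]
    have e1 : ∀ z : Fin n → ℝ, ∑ i, ∑ j, S i j * (z i * z j) = z ⬝ᵥ S.mulVec z := by
      intro z
      simp only [dotProduct, mulVec, Finset.mul_sum]
      exact Finset.sum_congr rfl fun i _ => Finset.sum_congr rfl fun j _ => by ring
    have e2 : ∀ i, Complex.normSq (x i) = p i * p i + q i * q i := fun i => rfl
    rw [e1 p, e1 q]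
    calc |p ⬝ᵥ S.mulVec p + q ⬝ᵥ S.mulVec q|
        ≤ |p ⬝ᵥ S.mulVec p| + |q ⬝ᵥ S.mulVec q| := abs_add_le _ _
      _ ≤ r * (p ⬝ᵥ p) + r * (q ⬝ᵥ q) :=
          add_le_add (quadA S hS r hev p) (quadA S hS r hev q)
      _ = r * ∑ i, Complex.normSq (x i) := by
          simp only [dotProduct, e2, Finset.sum_add_distrib]
          rw [mul_add, Finset.mul_sum, Finset.mul_sum]

/-- Spectral estimate (3.9): if `D = diagonal d` with entries in `[0,1]` and `S` is
real symmetric with all eigenvalues in `[-r, r]`, then every complex eigenvalue `μ`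
of `D * S` is real and satisfies `|μ| ≤ r`. -/
theorem diagonal_mul_symmetric_eigenvalues_real_and_bounded
    {n : ℕ} (d : Fin n → ℝ) (hd : ∀ i, d i ∈ Set.Icc (0 : ℝ) 1)
    (S : Matrix (Fin n) (Fin n) ℝ) (hS : S.IsHermitian)
    (r : ℝ) (hr : 0 ≤ r) (hev : ∀ i, |hS.eigenvalues i| ≤ r)
    (μ : ℂ) (v : Fin n → ℂ) (hv : v ≠ 0)
    (heig : ((Matrix.diagonal d * S).map (Complex.ofReal)).mulVec v = μ • v) :
    μ.im = 0 ∧ ‖μ‖ ≤ r := by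
  by_cases hμ : μ = 0
  · subst hμ; simp [hr]
  set a : Fin n → ℝ := fun i => Real.sqrt (d i) with hadef
  have ha2 : ∀ i, a i * a i = d i := fun i => Real.mul_self_sqrt (hd i).1
  have ha0 : ∀ i, 0 ≤ a i := fun i => Real.sqrt_nonneg _
  have ha1 : ∀ i, a i ≤ 1 := fun i => by rw [hadef, ← Real.sqrt_one]; exact Real.sqrt_le_sqrt (hd i).2
  set w : Fin n → ℂ := fun i => ∑ j, (S i j : ℂ) * v j with hwdef
  set u : Fin n → ℂ := fun i => (a i : ℂ) * w i with hudef
  set x : Fin n → ℂ := fun i => μ * v i with hxdef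
  have hcomp : ∀ i, (d i : ℂ) * w i = μ * v i := by
    intro i
    have h := congrFun heig i
    simp only [mulVec, dotProduct, Matrix.map_apply, Matrix.diagonal_mul, Matrix.of_apply,
      Complex.ofReal_mul, Pi.smul_apply, smul_eq_mul] at h
    rw [hwdef, Finset.mul_sum]
    rw [← h]
    exact Finset.sum_congr rfl fun j _ => by ring
  have hx : ∀ i, x i = (a i : ℂ) * u i := by
    intro i
    show μ * v i = (a i : ℂ) * ((a i : ℂ) * w i)
    rw [← hcomp i, ← ha2 i]
    push_cast
    ring
  have hu : u ≠ 0 := by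
    intro h0
    obtain ⟨i, hi⟩ := Function.ne_iff.mp hv
    apply hμ
    have : x i = 0 := by rw [hx i, h0]; simp
    rw [hxdef] at this
    exact (mul_eq_zero.mp this).resolve_right hi
  set c : ℝ := ∑ i, Complex.normSq (u i) with hcdef
  have hc : 0 < c := by
    obtain ⟨i, hi⟩ := Function.ne_iff.mp hu
    refine Finset.sum_pos' (fun j _ => Complex.normSq_nonneg _) ⟨i, Finset.mem_univ i, ?_⟩
    simpa [Complex.normSq_pos] using hi
  set Q : ℂ := ∑ i, ∑ j, (starRingEnd ℂ) (x i) * (S i j : ℂ) * x j with hQdef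
  have hQ : Q = μ * (c : ℂ) := by
    rw [hQdef]
    have hterm : ∀ i, ∑ j, (starRingEnd ℂ) (x i) * (S i j : ℂ) * x j
        = μ * (Complex.normSq (u i) : ℂ) := by
      intro i
      have hinner : ∑ j, (S i j : ℂ) * x j = μ * w i := by
        rw [hwdef, Finset.mul_sum]
        exact Finset.sum_congr rfl fun j _ => by rw [hxdef]; ring
      calc ∑ j, (starRingEnd ℂ) (x i) * (S i j : ℂ) * x j
          = (starRingEnd ℂ) (x i) * ∑ j, (S i j : ℂ) * x j := by
            rw [Finset.mul_sum]; exact Finset.sum_congr rfl fun j _ => by ring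
        _ = (starRingEnd ℂ) ((a i : ℂ) * u i) * (μ * w i) := by rw [hx i, hinner]
        _ = μ * ((starRingEnd ℂ) (u i) * ((a i : ℂ) * w i)) := by
            simp only [_root_.map_mul, Complex.conj_ofReal]; ring
        _ = μ * ((starRingEnd ℂ) (u i) * u i) := rfl
        _ = μ * (Complex.normSq (u i) : ℂ) := by
            rw [mul_comm ((starRingEnd ℂ) (u i)) (u i), Complex.mul_conj]
    rw [Finset.sum_congr rfl fun i _ => hterm i, ← Finset.mul_sum, hcdef]
    norm_cast
  obtain ⟨hQim, hQre⟩ := quadB S hS r hev x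
  rw [← hQdef] at hQim hQre
  have hxc : ∑ i, Complex.normSq (x i) ≤ c := by
    rw [hcdef]
    refine Finset.sum_le_sum fun i _ => ?_
    rw [hx i, Complex.normSq_mul, Complex.normSq_ofReal]
    have : a i * a i ≤ 1 := mul_le_one₀ (ha1 i) (ha0 i) (ha1 i)
    nlinarith [Complex.normSq_nonneg (u i)]
  have him : μ.im = 0 := by
    have : (μ * (c : ℂ)).im = 0 := by rw [← hQ]; exact hQim
    simp [Complex.mul_im] at this
    rcases this with h | h
    · exact h
    · exact absurd h hc.ne'
  refine ⟨him, ?_⟩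
  have habs : ‖μ‖ * c = |Q.re| := by
    have hQr : Q = ((Q.re : ℂ)) := Complex.ext rfl (by simp [hQim])
    have : ‖Q‖ = |Q.re| := by rw [hQr]; exact (Complex.norm_real _).trans (Real.norm_eq_abs _)
    rw [← this, hQ, norm_mul, Complex.norm_real, Real.norm_eq_abs, abs_of_pos hc]
  have : ‖μ‖ * c ≤ r * c :=
    habs ▸ hQre.trans (mul_le_mul_of_nonneg_left hxc hr)
  exact le_of_mul_le_mul_right this hc
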